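/- Assume γ ≠ 4, l ≠ −2 and m ≠ −2. Then z₁² = z₂² = z₃² = id_M; z₁ commutes with s₂ and with s₃; z₂ commutes with s₃; z₃ commutes with s₂; and z₁ ∘ z₂ = τ(2/(l+2), 0), z₁ ∘ z₃ = τ(0, 2/(m+2)), z₂ ∘ z₃ = τ(−2/(l+2), 2/(m+2)). If moreover Δ = 0, then z₂ and z₃ also commute with s₁. -/

import Mathlib

noncomputable section

variable {K : Type*} [Field K] [CharZero K]

/-- The linear functional `x ↦ c 0 * x 0 + c 1 * x 1 + c 2 * x 2` on `K³`. -/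
def lf (c : Fin 3 → K) : (Fin 3 → K) →ₗ[K] K :=
  c 0 • LinearMap.proj 0 + c 1 • LinearMap.proj 1 + c 2 • LinearMap.proj 2

/-- `s₁ : x ↦ x − (2x₁ − α x₂ − β x₃)·a₁` where `a₁ = Pi.single 0 1`. -/
def s1 (α β : K) : Module.End K (Fin 3 → K) :=
  LinearMap.id - (lf ![2, -α, -β]).smulRight (Pi.single 0 1)

/-- `s₂ : x ↦ x − (−x₁ + 2x₂ − l·x₃)·a₂`. -/
def s2 (l : K) : Module.End K (Fin 3 → K) :=
  LinearMap.id - (lf ![-1, 2, -l]).smulRight (Pi.single 1 1)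

/-- `s₃ : x ↦ x − (−x₁ − m·x₂ + 2x₃)·a₃`. -/
def s3 (m : K) : Module.End K (Fin 3 → K) :=
  LinearMap.id - (lf ![-1, -m, 2]).smulRight (Pi.single 2 1)

/-- `b = b₁ = (4−γ)a₁ + (l+2)a₂ + (m+2)a₃`, with `γ = l·m`. -/
def bvec (l m : K) : Fin 3 → K := ![4 - l * m, l + 2, m + 2]

/-- `b₂ = (2α+βm)a₁ + (4−β)a₂ + (α+2m)a₃`. -/
def b2vec (α β l m : K) : Fin 3 → K := ![2*α + β*m, 4 - β, α + 2*m]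

/-- `b₃ = (2β+αl)a₁ + (β+2l)a₂ + (4−α)a₃`. -/
def b3vec (α β l m : K) : Fin 3 → K := ![2*β + α*l, β + 2*l, 4 - α]

/-- `τ(λ,μ) : a₁ ↦ a₁ + ω·b, a₂ ↦ a₂ + λ·b, a₃ ↦ a₃ + μ·b`,
where `ω = −(λ(l+2) + μ(m+2))/(4−γ)`. -/
def tau (l m lam mu : K) : Module.End K (Fin 3 → K) :=
  LinearMap.id +
    (lf ![-(lam*(l+2) + mu*(m+2))/(4 - l*m), lam, mu]).smulRight (bvec l m)

/-- `τ` applied to a vector `(λ,μ) ∈ K²`. -/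
def tauv (l m : K) (v : K × K) : Module.End K (Fin 3 → K) := tau l m v.1 v.2

def c1 (α β : K) : K × K := (α, β)
def c2 (l : K) : K × K := (-2, l)
def c3 (m : K) : K × K := (m, -2)

/-- `z₁ : a₁ ↦ −a₁ + (2/(4−γ))·b, a₂ ↦ −a₂, a₃ ↦ −a₃`. -/
def z1 (l m : K) : Module.End K (Fin 3 → K) :=
  -LinearMap.id + (lf ![2/(4 - l*m), 0, 0]).smulRight (bvec l m)

/-- `z₂ : a₂ ↦ −a₂ + (2/(l+2))·b, a₁ ↦ −a₁, a₃ ↦ −a₃`. -/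
def z2 (l m : K) : Module.End K (Fin 3 → K) :=
  -LinearMap.id + (lf ![0, 2/(l+2), 0]).smulRight (bvec l m)

/-- `z₃ : a₃ ↦ −a₃ + (2/(m+2))·b, a₁ ↦ −a₁, a₂ ↦ −a₂`. -/
def z3 (l m : K) : Module.End K (Fin 3 → K) :=
  -LinearMap.id + (lf ![0, 0, 2/(m+2)]).smulRight (bvec l m)

/-- The linear functional `(λ,μ) ↦ c.1·λ + c.2·μ` on `K²`. -/
def lf2 (c : K × K) : (K × K) →ₗ[K] K := c.1 • LinearMap.fst K K K + c.2 • LinearMap.snd K K K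

/-- `σ₁(λ,μ) = (λ,μ) − ((λ(l+2)+μ(m+2))/(4−γ))·(α,β)`. -/
def sigma1 (α β l m : K) : Module.End K (K × K) :=
  LinearMap.id - (lf2 ((l+2)/(4 - l*m), (m+2)/(4 - l*m))).smulRight (α, β)

/-- `σ₂(λ,μ) = (λ,μ) + λ·(−2,l)`. -/
def sigma2 (l : K) : Module.End K (K × K) :=
  LinearMap.id + (LinearMap.fst K K K).smulRight ((-2 : K), l)

/-- `σ₃(λ,μ) = (λ,μ) + μ·(m,−2)`. -/
def sigma3 (m : K) : Module.End K (K × K) :=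
  LinearMap.id + (LinearMap.snd K K K).smulRight (m, (-2 : K))

/-- The sequence `u_x` : `u_x(0)=0, u_x(1)=u_x(2)=1, u_x(3)=x−1,
u_x(n+4) = (x−2)·u_x(n+2) − u_x(n)`. -/
def useq (x : K) : ℕ → K
  | 0 => 0
  | 1 => 1
  | 2 => 1
  | 3 => x - 1
  | (n+4) => (x - 2) * useq x (n+2) - useq x n


set_option maxHeartbeats 3000000 in
set_option linter.unusedSectionVars false in
/-- with `γ ≠ 4`, `l ≠ −2`, `m ≠ −2`: `z₁² = z₂² = z₃² = 1`;
`z₁` commutes with `s₂` and `s₃`; `z₂` commutes with `s₃`; `z₃` commutes with `s₂`;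
`z₁z₂ = τ(2/(l+2), 0)`, `z₁z₃ = τ(0, 2/(m+2))`, `z₂z₃ = τ(−2/(l+2), 2/(m+2))`;
and if moreover `Δ = 0` then `z₂` and `z₃` commute with `s₁`. -/
theorem stmt15 (α β l m : K) (hγ : l*m ≠ 4) (hl : l ≠ -2) (hm : m ≠ -2) :
    (z1 l m)^2 = 1 ∧ (z2 l m)^2 = 1 ∧ (z3 l m)^2 = 1 ∧
    z1 l m * s2 l = s2 l * z1 l m ∧
    z1 l m * s3 m = s3 m * z1 l m ∧
    z2 l m * s3 m = s3 m * z2 l m ∧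
    z3 l m * s2 l = s2 l * z3 l m ∧
    z1 l m * z2 l m = tau l m (2/(l+2)) 0 ∧
    z1 l m * z3 l m = tau l m 0 (2/(m+2)) ∧
    z2 l m * z3 l m = tau l m (-2/(l+2)) (2/(m+2)) ∧
    (8 - 2*α - 2*β - 2*(l*m) - (α*l + β*m) = 0 →
      z2 l m * s1 α β = s1 α β * z2 l m ∧ z3 l m * s1 α β = s1 α β * z3 l m) := by

  have h4 : (4 : K) - l*m ≠ 0 := sub_ne_zero.mpr (Ne.symm hγ)
  have hl2 : l + 2 ≠ 0 := fun h => hl (by linear_combination h)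
  have hm2 : m + 2 ≠ 0 := fun h => hm (by linear_combination h)
  have h4' : (4 : K) - m*l ≠ 0 := by rw [mul_comm]; exact h4
  have hlast : 8 - 2*α - 2*β - 2*(l*m) - (α*l + β*m) = 0 →
      z2 l m * s1 α β = s1 α β * z2 l m ∧ z3 l m * s1 α β = s1 α β * z3 l m := by
    intro hΔ
    have hβ : β = (8 - 2*α - 2*(l*m) - α*l)/(m+2) := by
      field_simp
      linear_combination -hΔ
    subst hβ
    constructor <;>
    · apply LinearMap.ext; intro x
      funext i
      fin_cases i <;>
        simp [z2, z3, s1, lf, bvec, Module.End.mul_apply,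
          Pi.single_apply, Matrix.vecHead, Matrix.vecTail, Function.comp, Fin.ext_iff] <;>
        field_simp <;>
        ring
  refine ⟨?_, ?_, ?_, ?_, ?_, ?_, ?_, ?_, ?_, ?_, hlast⟩ <;>
  · apply LinearMap.ext; intro x
    funext i
    fin_cases i <;>
      simp [z1, z2, z3, s2, s3, tau, lf, bvec, pow_two, Module.End.mul_apply,
        Pi.single_apply, Matrix.vecHead, Matrix.vecTail, Function.comp, Fin.ext_iff] <;>
      field_simp <;>
      ring

end
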